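/- Define E(x) = ∑_{i=1}^{3} i·D_i(x). For every l ∈ {0,1,2,3} and every k ∈ D_l, one has E(β^k) = E(β) - l in GR(4, 4^ℓ), i.e., ∑_{i=1}^{3} i·D_i(β^k) = ρ - l. -/

import Mathlib

open Finset

namespace Stmt17Aux

variable {K : Type*} [Field K] [CharP K 2]

lemma coeff_zero_of_truncate {y : WittVector 2 K} {c : K}
    (hx : (WittVector.truncate 2 y).coeff 0 = c) : y.coeff 0 = c := by
  rwa [WittVector.coeff_truncate] at hx

lemma sq_zero_of_coeff_zero (x : TruncatedWittVector 2 2 K) (hx : x.coeff 0 = 0) :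
    x * x = 0 := by
  obtain ⟨y, rfl⟩ := WittVector.truncate_surjective (p := 2) 2 K x
  have h0 : y.coeff 0 = 0 := coeff_zero_of_truncate hx
  rw [← map_mul]
  by_cases hy : y = 0
  · simp [hy]
  obtain ⟨n, a, ha, rfl⟩ := WittVector.verschiebung_nonzero hy
  cases n with
  | zero => simp only [Function.iterate_zero, id_eq] at h0; exact absurd h0 ha
  | succ n =>
    have hVV := WittVector.iterate_verschiebung_mul a a (n+1) (n+1)
    rw [hVV]
    have harith : (n+1) + (n+1) = ((n + n) + 1) + 1 := by omega
    rw [harith]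
    ext i
    fin_cases i
    · rw [WittVector.coeff_truncate]
      simp only [Fin.val_zero]
      rw [Function.iterate_succ_apply', WittVector.verschiebung_coeff_zero]
      simp
    · rw [WittVector.coeff_truncate]
      simp only [Fin.val_one]
      rw [Function.iterate_succ_apply']
      show (WittVector.verschiebung _).coeff (Nat.succ 0) = _
      rw [WittVector.verschiebung_coeff_succ, Function.iterate_succ_apply',
        WittVector.verschiebung_coeff_zero]
      simp

lemma four_eq_zero : (4 : TruncatedWittVector 2 2 K) = 0 := by
  have h2 : ((2 : TruncatedWittVector 2 2 K)).coeff 0 = 0 := by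
    have h : (2 : TruncatedWittVector 2 2 K) = WittVector.truncate 2 (2 : WittVector 2 K) := by
      rw [map_ofNat]
    rw [h, WittVector.coeff_truncate]
    have := WittVector.coeff_p_zero 2 K
    simpa using this
  have hsq := sq_zero_of_coeff_zero (2 : TruncatedWittVector 2 2 K) h2
  calc (4 : TruncatedWittVector 2 2 K) = 2 * 2 := by norm_num
  _ = 0 := hsq

lemma isUnit_of_coeff_ne_zero (x : TruncatedWittVector 2 2 K) (hx : x.coeff 0 ≠ 0) :
    IsUnit x := by
  obtain ⟨y, rfl⟩ := WittVector.truncate_surjective (p := 2) 2 K x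
  have h0 : y.coeff 0 ≠ 0 := fun hc => hx (by rw [WittVector.coeff_truncate]; exact hc)
  exact (WittVector.isUnit_of_coeff_zero_ne_zero y h0).map _

lemma geom_zero (γ : TruncatedWittVector 2 2 K) {m : ℕ} (hm : Odd m)
    (h1 : γ ^ m = 1) (hne : γ ≠ 1) : ∑ n ∈ Finset.range m, γ ^ n = 0 := by
  have hunit : IsUnit (γ - 1) := by
    rcases eq_or_ne ((γ - 1).coeff 0) 0 with h0 | h0
    · exfalso
      have hsq : (γ - 1) * (γ - 1) = 0 := sq_zero_of_coeff_zero _ h0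
      have h40 : (4 : TruncatedWittVector 2 2 K) = 0 := four_eq_zero
      have h4 : γ ^ 4 = 1 := by
        linear_combination ((γ-1)*(γ-1) + 4*(γ-1) + 6) * hsq + (γ - 1) * h40
      have hdvd : orderOf γ ∣ Nat.gcd 4 m :=
        Nat.dvd_gcd (orderOf_dvd_of_pow_eq_one h4) (orderOf_dvd_of_pow_eq_one h1)
      have hcop : Nat.Coprime 4 m := by
        have h2 : Nat.Coprime 2 m := Nat.coprime_two_left.mpr hm
        have := Nat.Coprime.pow_left 2 h2
        simpa using this
      rw [hcop, Nat.dvd_one, orderOf_eq_one_iff] at hdvd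
      exact hne hdvd
    · exact isUnit_of_coeff_ne_zero _ h0
  have hgeom : (γ - 1) * ∑ n ∈ Finset.range m, γ ^ n = 0 := by
    have h := geom_sum_mul γ m
    rw [mul_comm] at h
    rw [h, h1, sub_self]
  exact (IsUnit.mul_right_eq_zero hunit).mp hgeom

lemma unit_pow_eq_pow_iff {M : Type*} [CommMonoid M] {x : M} (hx : IsUnit x) (u v : ℕ) :
    x ^ u = x ^ v ↔ u ≡ v [MOD orderOf x] := by
  lift x to Mˣ using hx
  rw [← Units.val_pow_eq_pow_val, ← Units.val_pow_eq_pow_val, Units.val_inj, orderOf_units]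
  exact pow_eq_pow_iff_modEq

end Stmt17Aux

theorem stmt17
    (p q : ℕ) (hp : Nat.Prime p) (hq : Nat.Prime q) (hne : p ≠ q)
    (hpo : Odd p) (hqo : Odd q)
    (hgcd : Nat.gcd (p - 1) (q - 1) = 4)
    (e : ℕ) (he : e = (p - 1) * (q - 1) / 4)
    (g h : ℕ)
    (hgp : orderOf (g : ZMod p) = p - 1)
    (hgq : orderOf (g : ZMod q) = q - 1)
    (hhp : (h : ZMod p) = (g : ZMod p))
    (hhq : (h : ZMod q) = 1)
    (D : ℕ → Finset (ZMod (p * q)))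
    (hD : ∀ i, D i = (Finset.range (e / 4) ×ˢ Finset.range 4).image
        (fun sj => (g : ZMod (p * q)) ^ (4 * sj.1 + i) * (h : ZMod (p * q)) ^ sj.2))
    (ℓ : ℕ) (β : TruncatedWittVector 2 2 (GaloisField 2 ℓ))
    (hβu : IsUnit β) (hβo : orderOf β = p * q)
    (ρ : TruncatedWittVector 2 2 (GaloisField 2 ℓ))
    (hρ : ρ = ∑ i ∈ Finset.Icc (1 : ℕ) 3, ((i : ℕ) : TruncatedWittVector 2 2 (GaloisField 2 ℓ)) * ∑ u ∈ D i, β ^ u.val)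
 :
    ∀ l < 4, ∀ k ∈ D l,
      ∑ i ∈ Finset.Icc (1 : ℕ) 3,
          ((i : ℕ) : TruncatedWittVector 2 2 (GaloisField 2 ℓ)) * (∑ u ∈ D i, (β ^ k.val) ^ u.val)
        = ρ - (l : TruncatedWittVector 2 2 (GaloisField 2 ℓ)) := by
  classical
  intro l hl k hk
  haveI : Fact (Nat.Prime p) := ⟨hp⟩
  haveI : Fact (Nat.Prime q) := ⟨hq⟩
  haveI : NeZero (p * q) := ⟨Nat.mul_ne_zero hp.pos.ne' hq.pos.ne'⟩
  -- basic numerology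
  have h4p : (4 : ℕ) ∣ p - 1 := hgcd ▸ Nat.gcd_dvd_left _ _
  have h4q : (4 : ℕ) ∣ q - 1 := hgcd ▸ Nat.gcd_dvd_right _ _
  have hp5 : 5 ≤ p := by obtain ⟨a, ha⟩ := h4p; have := hp.two_le; omega
  have hq5 : 5 ≤ q := by obtain ⟨b, hb⟩ := h4q; have := hq.two_le; omega
  have hcop : Nat.Coprime p q := (Nat.coprime_primes hp hq).mpr hne
  obtain ⟨a, ha⟩ := h4p
  obtain ⟨b, hb⟩ := h4q
  have heab : e = 4 * (a * b) := by
    have hab : (p - 1) * (q - 1) = 4 * (4 * (a * b)) := by rw [ha, hb]; ring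
    rw [he, hab]; exact Nat.mul_div_cancel_left _ (by norm_num)
  have hE4 : e / 4 = a * b := by rw [heab]; exact Nat.mul_div_cancel_left _ (by norm_num)
  have hapos : 0 < a := by omega
  have hbpos : 0 < b := by omega
  have hE4pos : 0 < e / 4 := by rw [hE4]; exact Nat.mul_pos hapos hbpos
  have he4e : 4 * (e / 4) = e := by rw [hE4, heab]
  have h4e : (4 : ℕ) ∣ e := ⟨e / 4, he4e.symm⟩
  have hepos : 0 < e := by omega
  -- CRT
  set φ := ZMod.chineseRemainder hcop with hφdef
  have hφg : φ (g : ZMod (p * q)) = ((g : ZMod p), (g : ZMod q)) := by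
    have h1 := map_natCast (φ : ZMod (p * q) →+* ZMod p × ZMod q) g
    rw [show (φ : ZMod (p * q) →+* ZMod p × ZMod q) (g : ZMod (p*q)) = φ (g : ZMod (p*q)) from rfl] at h1
    rw [h1]
    exact Prod.ext (by simp) (by simp)
  have hφh : φ (h : ZMod (p * q)) = ((h : ZMod p), (h : ZMod q)) := by
    have h1 := map_natCast (φ : ZMod (p * q) →+* ZMod p × ZMod q) h
    rw [show (φ : ZMod (p * q) →+* ZMod p × ZMod q) (h : ZMod (p*q)) = φ (h : ZMod (p*q)) from rfl] at h1
    rw [h1]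
    exact Prod.ext (by simp) (by simp)
  -- units
  have hgup : IsUnit (g : ZMod p) :=
    IsUnit.of_pow_eq_one (n := p - 1) (by rw [← hgp]; exact pow_orderOf_eq_one _) (by omega)
  have hguq : IsUnit (g : ZMod q) :=
    IsUnit.of_pow_eq_one (n := q - 1) (by rw [← hgq]; exact pow_orderOf_eq_one _) (by omega)
  have hhup : IsUnit (h : ZMod p) := hhp ▸ hgup
  have hhuq : IsUnit (h : ZMod q) := hhq ▸ isUnit_one
  have hGu : IsUnit (g : ZMod (p * q)) := by
    rw [ZMod.isUnit_iff_coprime]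
    exact Nat.Coprime.mul_right ((ZMod.isUnit_iff_coprime g p).mp hgup)
      ((ZMod.isUnit_iff_coprime g q).mp hguq)
  have hHu : IsUnit (h : ZMod (p * q)) := by
    rw [ZMod.isUnit_iff_coprime]
    exact Nat.Coprime.mul_right ((ZMod.isUnit_iff_coprime h p).mp hhup)
      ((ZMod.isUnit_iff_coprime h q).mp hhuq)
  -- pow iffs
  have hpowp : ∀ u v : ℕ, ((g : ZMod p) ^ u = (g : ZMod p) ^ v ↔ u ≡ v [MOD p - 1]) := by
    intro u v; rw [← hgp]; exact Stmt17Aux.unit_pow_eq_pow_iff hgup u v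
  have hpowq : ∀ u v : ℕ, ((g : ZMod q) ^ u = (g : ZMod q) ^ v ↔ u ≡ v [MOD q - 1]) := by
    intro u v; rw [← hgq]; exact Stmt17Aux.unit_pow_eq_pow_iff hguq u v
  -- g^e = 1
  have hGe : (g : ZMod (p * q)) ^ e = 1 := by
    apply φ.injective
    rw [map_pow, map_one, hφg]
    have h1 : (g : ZMod p) ^ e = 1 := by
      apply orderOf_dvd_iff_pow_eq_one.mp
      rw [hgp]; exact ⟨b, by rw [heab, ha]; ring⟩
    have h2 : (g : ZMod q) ^ e = 1 := by
      apply orderOf_dvd_iff_pow_eq_one.mp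
      rw [hgq]; exact ⟨a, by rw [heab, hb]; ring⟩
    exact Prod.ext (by simpa using h1) (by simpa using h2)
  -- h^(p-1) = 1
  have hHp1 : (h : ZMod (p * q)) ^ (p - 1) = 1 := by
    apply φ.injective
    rw [map_pow, map_one, hφh]
    have h1 : (h : ZMod p) ^ (p - 1) = 1 := by
      rw [hhp]
      apply orderOf_dvd_iff_pow_eq_one.mp
      rw [hgp]
    have h2 : (h : ZMod q) ^ (p - 1) = 1 := by rw [hhq, one_pow]
    exact Prod.ext (by simpa using h1) (by simpa using h2)
  -- h^4 = g^(4c)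
  have hH4 : ∃ c : ℕ, (h : ZMod (p * q)) ^ 4 = (g : ZMod (p * q)) ^ (4 * c) := by
    have hab1 : Nat.Coprime a b := by
      have hg4 := hgcd
      rw [ha, hb, Nat.gcd_mul_left] at hg4
      have : Nat.gcd a b = 1 := by omega
      exact this
    obtain ⟨c, hc1, hc2⟩ := Nat.chineseRemainder hab1 1 0
    refine ⟨c, ?_⟩
    apply φ.injective
    rw [map_pow, map_pow, hφg, hφh]
    have h1 : (h : ZMod p) ^ 4 = (g : ZMod p) ^ (4 * c) := by
      rw [hhp]
      apply (hpowp 4 (4 * c)).mpr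
      rw [ha]
      have := Nat.ModEq.mul_left' (c := 4) hc1.symm
      simpa using this
    have h2 : (h : ZMod q) ^ 4 = (g : ZMod q) ^ (4 * c) := by
      rw [hhq, one_pow]
      symm
      apply orderOf_dvd_iff_pow_eq_one.mp
      rw [hgq, hb]
      have hbc : b ∣ c := (Nat.modEq_zero_iff_dvd).mp hc2
      exact Nat.mul_dvd_mul_left 4 hbc
    exact Prod.ext (by simpa using h1) (by simpa using h2)
  -- exponent reduction for g
  have hkey : ∀ (A r' : ℕ), (g : ZMod (p * q)) ^ (4 * A + r')
      = (g : ZMod (p * q)) ^ (4 * (A % (e / 4)) + r') := by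
    intro A r'
    conv_lhs => rw [← Nat.mod_add_div A (e / 4)]
    have harith : 4 * (A % (e / 4) + (e / 4) * (A / (e / 4))) + r'
        = (4 * (A % (e / 4)) + r') + e * (A / (e / 4)) := by
      calc 4 * (A % (e / 4) + (e / 4) * (A / (e / 4))) + r'
          = (4 * (A % (e / 4)) + r') + (4 * (e / 4)) * (A / (e / 4)) := by ring
        _ = (4 * (A % (e / 4)) + r') + e * (A / (e / 4)) := by rw [he4e]
    rw [harith, pow_add, pow_mul, hGe, one_pow, mul_one]
  -- membership lemma
  have hmem : ∀ r : ℕ, r < 4 → ∀ u v : ℕ, u % 4 = r →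
      (g : ZMod (p * q)) ^ u * (h : ZMod (p * q)) ^ v ∈ D r := by
    obtain ⟨c, hc⟩ := hH4
    intro r hr u v hu
    have e1 : (h : ZMod (p * q)) ^ v
        = (g : ZMod (p * q)) ^ (4 * (c * (v / 4))) * (h : ZMod (p * q)) ^ (v % 4) := by
      conv_lhs => rw [← Nat.div_add_mod v 4]
      rw [pow_add, pow_mul, hc, ← pow_mul]
      ring_nf
    have e2 : (g : ZMod (p * q)) ^ u = (g : ZMod (p * q)) ^ (4 * (u / 4) + r) := by
      congr 1
      omega
    set A := u / 4 + c * (v / 4) with hA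
    have e3 : (g : ZMod (p * q)) ^ u * (h : ZMod (p * q)) ^ v
        = (g : ZMod (p * q)) ^ (4 * (A % (e / 4)) + r) * (h : ZMod (p * q)) ^ (v % 4) := by
      rw [e2, e1, ← mul_assoc, ← pow_add, ← hkey]
      congr 2
      ring
    rw [hD r, Finset.mem_image]
    refine ⟨(A % (e / 4), v % 4), ?_, ?_⟩
    · rw [Finset.mem_product]
      exact ⟨Finset.mem_range.mpr (Nat.mod_lt _ hE4pos), Finset.mem_range.mpr (by omega)⟩
    · exact e3.symm
  -- representation lemma
  have hrep : ∀ i : ℕ, ∀ x ∈ D i, ∃ u v : ℕ, u % 4 = i % 4 ∧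
      x = (g : ZMod (p * q)) ^ u * (h : ZMod (p * q)) ^ v := by
    intro i x hx
    rw [hD i, Finset.mem_image] at hx
    obtain ⟨⟨s, j⟩, hsj, hxe⟩ := hx
    exact ⟨4 * s + i, j, by omega, hxe.symm⟩
  -- congruence lemma
  have hcong : ∀ u v u' v' : ℕ,
      (g : ZMod (p * q)) ^ u * (h : ZMod (p * q)) ^ v
        = (g : ZMod (p * q)) ^ u' * (h : ZMod (p * q)) ^ v' → u % 4 = u' % 4 := by
    intro u v u' v' hx
    have h2 := congrArg (fun z => (φ z).2) hx
    simp only [map_mul, map_pow, hφg, hφh, Prod.snd_mul, Prod.pow_snd, hhq, one_pow, mul_one] at h2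
    have hmodq := (hpowq u u').mp h2
    have h4q' : (4 : ℕ) ∣ q - 1 := ⟨b, hb⟩
    exact Nat.ModEq.of_dvd h4q' hmodq
  -- disjointness
  have hdisj : ∀ i i' : ℕ, i < 4 → i' < 4 → i ≠ i' → Disjoint (D i) (D i') := by
    intro i i' hi hi' hii
    rw [Finset.disjoint_left]
    intro x hxi hxi'
    obtain ⟨u, v, hu, hxe⟩ := hrep i x hxi
    obtain ⟨u', v', hu', hxe'⟩ := hrep i' x hxi'
    have := hcong u v u' v' (hxe.symm.trans hxe')
    omega
  -- surjectivity of powers mod p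
  have hsurjp : ∀ y : ZMod p, IsUnit y → ∃ cexp : ℕ, y = (g : ZMod p) ^ cexp := by
    intro y hy
    have hord : orderOf hgup.unit = p - 1 := by
      rw [← hgp, ← orderOf_units, IsUnit.unit_spec]
    have htop : Subgroup.zpowers hgup.unit = ⊤ := by
      apply Subgroup.eq_top_of_card_eq
      rw [Nat.card_eq_fintype_card, Fintype.card_zpowers, hord, Nat.card_eq_fintype_card,
        ZMod.card_units]
    have hymem : hy.unit ∈ Subgroup.zpowers hgup.unit := htop ▸ Subgroup.mem_top _
    rw [← mem_powers_iff_mem_zpowers, Submonoid.mem_powers_iff] at hymem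
    obtain ⟨cexp, hcexp⟩ := hymem
    refine ⟨cexp, ?_⟩
    have := congrArg (Units.val) hcexp
    rw [Units.val_pow_eq_pow_val, IsUnit.unit_spec, IsUnit.unit_spec] at this
    exact this.symm
  have hsurjq : ∀ y : ZMod q, IsUnit y → ∃ cexp : ℕ, y = (g : ZMod q) ^ cexp := by
    intro y hy
    have hord : orderOf hguq.unit = q - 1 := by
      rw [← hgq, ← orderOf_units, IsUnit.unit_spec]
    have htop : Subgroup.zpowers hguq.unit = ⊤ := by
      apply Subgroup.eq_top_of_card_eq
      rw [Nat.card_eq_fintype_card, Fintype.card_zpowers, hord, Nat.card_eq_fintype_card,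
        ZMod.card_units]
    have hymem : hy.unit ∈ Subgroup.zpowers hguq.unit := htop ▸ Subgroup.mem_top _
    rw [← mem_powers_iff_mem_zpowers, Submonoid.mem_powers_iff] at hymem
    obtain ⟨cexp, hcexp⟩ := hymem
    refine ⟨cexp, ?_⟩
    have := congrArg (Units.val) hcexp
    rw [Units.val_pow_eq_pow_val, IsUnit.unit_spec, IsUnit.unit_spec] at this
    exact this.symm
  -- coverage
  have hcover : ∀ x : ZMod (p * q), IsUnit x → ∃ r : ℕ, r < 4 ∧ x ∈ D r := by
    intro x hx
    have hx1 : IsUnit (φ x).1 := by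
      have := hx.map ((RingHom.fst (ZMod p) (ZMod q)).comp (φ : ZMod (p*q) →+* ZMod p × ZMod q))
      simpa using this
    have hx2 : IsUnit (φ x).2 := by
      have := hx.map ((RingHom.snd (ZMod p) (ZMod q)).comp (φ : ZMod (p*q) →+* ZMod p × ZMod q))
      simpa using this
    obtain ⟨cc, hccv⟩ := hsurjp (φ x).1 hx1
    obtain ⟨dd, hddv⟩ := hsurjq (φ x).2 hx2
    set v := cc + dd * (p - 2) with hv
    refine ⟨dd % 4, Nat.mod_lt _ (by norm_num), ?_⟩
    have hxeq : x = (g : ZMod (p * q)) ^ dd * (h : ZMod (p * q)) ^ v := by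
      apply φ.injective
      rw [map_mul, map_pow, map_pow, hφg, hφh]
      have h1 : (φ x).1 = (g : ZMod p) ^ dd * (h : ZMod p) ^ v := by
        rw [hhp, ← pow_add, hccv]
        apply (hpowp cc (dd + v)).mpr
        have harith : dd + v = cc + dd * ((p - 2) + 1) := by rw [hv]; ring
        have hp21 : (p - 2) + 1 = p - 1 := by omega
        rw [harith, hp21]
        apply Nat.ModEq.symm
        calc cc + dd * (p - 1) ≡ cc + dd * 0 [MOD p - 1] :=
              Nat.ModEq.add_left _ (Nat.ModEq.mul_left _ (Nat.modEq_zero_iff_dvd.mpr dvd_rfl))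
        _ = cc := by ring_nf
      have h2 : (φ x).2 = (g : ZMod q) ^ dd * (h : ZMod q) ^ v := by
        rw [hhq, one_pow, mul_one, hddv]
      exact Prod.ext (by simpa using h1) (by simpa using h2)
    rw [hxeq]
    exact hmem (dd % 4) (by omega) dd v rfl
  -- every element of D i is a unit
  have hDunit : ∀ i : ℕ, ∀ x ∈ D i, IsUnit x := by
    intro i x hx
    obtain ⟨u, v, _, hxe⟩ := hrep i x hx
    rw [hxe]
    exact (hGu.pow u).mul (hHu.pow v)
  -- the power of β only depends on exponent mod p*q
  have hβN : ∀ n : ℕ, β ^ n = β ^ (n % (p * q)) := by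
    intro n
    conv_lhs => rw [← Nat.div_add_mod n (p * q)]
    rw [pow_add, pow_mul, ← hβo, pow_orderOf_eq_one, one_pow, one_mul]
  -- main sum-shift
  have hsum : ∀ i : ℕ, i < 4 →
      (∑ u ∈ D i, (β ^ k.val) ^ u.val) = ∑ u ∈ D ((i + l) % 4), β ^ u.val := by
    intro i hi
    obtain ⟨a0, b0, ha0, hkeq⟩ := hrep l k hk
    have hl4 : l % 4 = l := Nat.mod_eq_of_lt hl
    rw [hl4] at ha0
    set kinv := (g : ZMod (p * q)) ^ (a0 * (e - 1)) * (h : ZMod (p * q)) ^ (b0 * (p - 2))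
      with hkinvdef
    have hkk : k * kinv = 1 := by
      rw [hkeq, hkinvdef, mul_mul_mul_comm, ← pow_add, ← pow_add]
      have e1 : a0 + a0 * (e - 1) = e * a0 := by
        have h2 : e - 1 + 1 = e := Nat.succ_pred_eq_of_pos hepos
        calc a0 + a0 * (e - 1) = ((e - 1) + 1) * a0 := by ring
        _ = e * a0 := by rw [h2]
      have e2 : b0 + b0 * (p - 2) = (p - 1) * b0 := by
        have h2 : p - 2 + 1 = p - 1 := by omega
        calc b0 + b0 * (p - 2) = ((p - 2) + 1) * b0 := by ring
        _ = (p - 1) * b0 := by rw [h2]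
      rw [e1, e2, pow_mul, pow_mul, hGe, hHp1, one_pow, one_pow, one_mul]
    have hpt : ∀ u : ZMod (p * q), (β ^ k.val) ^ u.val = β ^ ((k * u).val) := by
      intro u
      rw [← pow_mul, ZMod.val_mul, ← hβN]
    rw [Finset.sum_congr rfl (fun u _ => hpt u)]
    refine Finset.sum_nbij' (i := fun u => k * u) (j := fun w => kinv * w) ?_ ?_ ?_ ?_ ?_
    · intro u hu
      obtain ⟨uu, vv, huu, hue⟩ := hrep i u hu
      show k * u ∈ D ((i + l) % 4)
      rw [hkeq, hue, mul_mul_mul_comm, ← pow_add, ← pow_add]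
      apply hmem ((i + l) % 4) (by omega)
      have hi4 : i % 4 = i := Nat.mod_eq_of_lt hi
      rw [hi4] at huu
      omega
    · intro w hw
      obtain ⟨wu, wv, hwu, hwe⟩ := hrep ((i + l) % 4) w hw
      show kinv * w ∈ D i
      rw [hkinvdef, hwe, mul_mul_mul_comm, ← pow_add, ← pow_add]
      apply hmem i hi
      have he1 : (e - 1) % 4 = 3 := by omega
      have hwu4 : wu % 4 = (i + l) % 4 := by omega
      rw [Nat.add_mod, Nat.mul_mod, ha0, he1, hwu4]
      omega
    · intro u _
      show kinv * (k * u) = u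
      rw [← mul_assoc, mul_comm kinv k, hkk, one_mul]
    · intro w _
      show k * (kinv * w) = w
      rw [← mul_assoc, hkk, one_mul]
    · intro u _
      rfl
  -- the union of the classes is the set of units
  have hUnion : D 0 ∪ D 1 ∪ D 2 ∪ D 3
      = Finset.univ.filter (fun x : ZMod (p * q) => IsUnit x) := by
    ext x
    simp only [Finset.mem_union, Finset.mem_filter, Finset.mem_univ, true_and]
    constructor
    · rintro (((hx | hx) | hx) | hx)
      · exact hDunit 0 x hx
      · exact hDunit 1 x hx
      · exact hDunit 2 x hx
      · exact hDunit 3 x hx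
    · intro hx
      obtain ⟨r, hr, hmem'⟩ := hcover x hx
      have : r = 0 ∨ r = 1 ∨ r = 2 ∨ r = 3 := by omega
      rcases this with rfl | rfl | rfl | rfl
      · exact Or.inl (Or.inl (Or.inl hmem'))
      · exact Or.inl (Or.inl (Or.inr hmem'))
      · exact Or.inl (Or.inr hmem')
      · exact Or.inr hmem'
  -- sum over all units equals 1
  have hUsum : ∑ x ∈ Finset.univ.filter (fun x : ZMod (p * q) => IsUnit x), β ^ x.val = 1 := by
    have hUval : ∑ x ∈ Finset.univ.filter (fun x : ZMod (p * q) => IsUnit x), β ^ x.val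
        = ∑ n ∈ (Finset.range (p * q)).filter (fun n => ¬ (p ∣ n ∨ q ∣ n)), β ^ n := by
      refine Finset.sum_nbij' (i := fun x => x.val) (j := fun n => (n : ZMod (p * q)))
        ?_ ?_ ?_ ?_ ?_
      · intro x hx
        rw [Finset.mem_filter] at hx ⊢
        have hxu : IsUnit ((x.val : ℕ) : ZMod (p * q)) := by
          rw [ZMod.natCast_rightInverse x]; exact hx.2
        have hco : Nat.Coprime x.val (p * q) := (ZMod.isUnit_iff_coprime _ _).mp hxu
        refine ⟨Finset.mem_range.mpr (ZMod.val_lt x), ?_⟩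
        rintro (hdvd | hdvd)
        · have hc1 : Nat.Coprime x.val p := Nat.Coprime.coprime_dvd_right ⟨q, rfl⟩ hco
          exact (hp.coprime_iff_not_dvd.mp hc1.symm) hdvd
        · have hc2 : Nat.Coprime x.val q := Nat.Coprime.coprime_dvd_right ⟨p, mul_comm p q⟩ hco
          exact (hq.coprime_iff_not_dvd.mp hc2.symm) hdvd
      · intro n hn
        rw [Finset.mem_filter] at hn
        rw [Finset.mem_filter]
        refine ⟨Finset.mem_univ _, ?_⟩
        rw [ZMod.isUnit_iff_coprime]
        push_neg at hn
        exact Nat.Coprime.mul_right ((hp.coprime_iff_not_dvd.mpr hn.2.1).symm)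
          ((hq.coprime_iff_not_dvd.mpr hn.2.2).symm)
      · intro x _
        exact ZMod.natCast_rightInverse x
      · intro n hn
        rw [Finset.mem_filter, Finset.mem_range] at hn
        exact ZMod.val_cast_of_lt hn.1
      · intro x _
        rfl
    rw [hUval]
    have hβ1 : β ≠ 1 := by
      intro hb
      rw [hb, orderOf_one] at hβo
      have : 5 * 5 ≤ p * q := Nat.mul_le_mul hp5 hq5
      omega
    have htot : ∑ n ∈ Finset.range (p * q), β ^ n = 0 :=
      Stmt17Aux.geom_zero β (hpo.mul hqo) (by rw [← hβo]; exact pow_orderOf_eq_one β) hβ1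
    have hA : ∑ n ∈ (Finset.range (p * q)).filter (fun n => p ∣ n), β ^ n = 0 := by
      have himg : (Finset.range (p * q)).filter (fun n => p ∣ n)
          = (Finset.range q).image (fun t => p * t) := by
        ext n
        simp only [Finset.mem_filter, Finset.mem_range, Finset.mem_image]
        constructor
        · rintro ⟨hlt, t, rfl⟩
          exact ⟨t, lt_of_mul_lt_mul_left hlt (Nat.zero_le p), rfl⟩
        · rintro ⟨t, ht, rfl⟩
          exact ⟨(mul_lt_mul_iff_right₀ hp.pos).mpr ht, ⟨t, rfl⟩⟩
      rw [himg, Finset.sum_image (fun t _ t' _ hp' => Nat.eq_of_mul_eq_mul_left hp.pos hp')]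
      have hβp1 : β ^ p ≠ 1 := by
        intro hb
        have hd := orderOf_dvd_of_pow_eq_one hb
        rw [hβo] at hd
        have h1 := Nat.le_of_dvd hp.pos hd
        have h2 : p * 2 ≤ p * q := Nat.mul_le_mul_left p (by omega)
        omega
      have := Stmt17Aux.geom_zero (β ^ p) hqo
        (by rw [← pow_mul, ← hβo]; exact pow_orderOf_eq_one β) hβp1
      calc ∑ t ∈ Finset.range q, β ^ (p * t) = ∑ t ∈ Finset.range q, (β ^ p) ^ t := by
            refine Finset.sum_congr rfl fun t _ => ?_
            rw [← pow_mul]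
        _ = 0 := this
    have hB : ∑ n ∈ (Finset.range (p * q)).filter (fun n => q ∣ n), β ^ n = 0 := by
      have himg : (Finset.range (p * q)).filter (fun n => q ∣ n)
          = (Finset.range p).image (fun t => q * t) := by
        ext n
        simp only [Finset.mem_filter, Finset.mem_range, Finset.mem_image]
        constructor
        · rintro ⟨hlt, t, rfl⟩
          rw [mul_comm p q] at hlt
          exact ⟨t, lt_of_mul_lt_mul_left hlt (Nat.zero_le q), rfl⟩
        · rintro ⟨t, ht, rfl⟩
          refine ⟨by rw [mul_comm p q]; exact (mul_lt_mul_iff_right₀ hq.pos).mpr ht, ⟨t, rfl⟩⟩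
      rw [himg, Finset.sum_image (fun t _ t' _ hq' => Nat.eq_of_mul_eq_mul_left hq.pos hq')]
      have hβq1 : β ^ q ≠ 1 := by
        intro hb
        have hd := orderOf_dvd_of_pow_eq_one hb
        rw [hβo, mul_comm p q] at hd
        have h1 := Nat.le_of_dvd hq.pos hd
        have h2 : q * 2 ≤ q * p := Nat.mul_le_mul_left q (by omega)
        omega
      have := Stmt17Aux.geom_zero (β ^ q) hpo
        (by rw [← pow_mul, mul_comm q p, ← hβo]; exact pow_orderOf_eq_one β) hβq1
      calc ∑ t ∈ Finset.range p, β ^ (q * t) = ∑ t ∈ Finset.range p, (β ^ q) ^ t := by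
            refine Finset.sum_congr rfl fun t _ => ?_
            rw [← pow_mul]
        _ = 0 := this
    have hABinter : ((Finset.range (p * q)).filter (fun n => p ∣ n))
        ∩ ((Finset.range (p * q)).filter (fun n => q ∣ n)) = {0} := by
      ext n
      simp only [Finset.mem_inter, Finset.mem_filter, Finset.mem_range, Finset.mem_singleton]
      constructor
      · rintro ⟨⟨hlt, hdp⟩, ⟨-, hdq⟩⟩
        exact Nat.eq_zero_of_dvd_of_lt (Nat.Coprime.mul_dvd_of_dvd_of_dvd hcop hdp hdq) hlt
      · rintro rfl
        exact ⟨⟨Nat.pos_of_ne_zero (NeZero.ne _), dvd_zero p⟩, ⟨Nat.pos_of_ne_zero (NeZero.ne _), dvd_zero q⟩⟩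
    have hcomb := Finset.sum_union_inter (s₁ := (Finset.range (p * q)).filter (fun n => p ∣ n))
      (s₂ := (Finset.range (p * q)).filter (fun n => q ∣ n)) (f := fun n => β ^ n)
    have hsplit := Finset.sum_filter_add_sum_filter_not (Finset.range (p * q))
      (fun n => p ∣ n ∨ q ∣ n) (fun n => β ^ n)
    rw [← Finset.filter_or] at hcomb
    rw [hABinter, Finset.sum_singleton, hA, hB, pow_zero] at hcomb
    rw [htot] at hsplit
    linear_combination hsplit - hcomb
  -- sum decomposition over the four classes
  have h40 : (4 : TruncatedWittVector 2 2 (GaloisField 2 ℓ)) = 0 := Stmt17Aux.four_eq_zero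
  have hT : (∑ u ∈ D 0, β ^ u.val) + (∑ u ∈ D 1, β ^ u.val)
      + (∑ u ∈ D 2, β ^ u.val) + (∑ u ∈ D 3, β ^ u.val) = 1 := by
    have hd01 : Disjoint (D 0) (D 1) := hdisj 0 1 (by norm_num) (by norm_num) (by norm_num)
    have hd02 : Disjoint (D 0) (D 2) := hdisj 0 2 (by norm_num) (by norm_num) (by norm_num)
    have hd03 : Disjoint (D 0) (D 3) := hdisj 0 3 (by norm_num) (by norm_num) (by norm_num)
    have hd12 : Disjoint (D 1) (D 2) := hdisj 1 2 (by norm_num) (by norm_num) (by norm_num)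
    have hd13 : Disjoint (D 1) (D 3) := hdisj 1 3 (by norm_num) (by norm_num) (by norm_num)
    have hd23 : Disjoint (D 2) (D 3) := hdisj 2 3 (by norm_num) (by norm_num) (by norm_num)
    have hD2 : Disjoint (D 0 ∪ D 1) (D 2) := Finset.disjoint_union_left.mpr ⟨hd02, hd12⟩
    have hD3 : Disjoint (D 0 ∪ D 1 ∪ D 2) (D 3) :=
      Finset.disjoint_union_left.mpr ⟨Finset.disjoint_union_left.mpr ⟨hd03, hd13⟩, hd23⟩
    calc (∑ u ∈ D 0, β ^ u.val) + (∑ u ∈ D 1, β ^ u.val)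
        + (∑ u ∈ D 2, β ^ u.val) + (∑ u ∈ D 3, β ^ u.val)
        = ∑ u ∈ D 0 ∪ D 1 ∪ D 2 ∪ D 3, β ^ u.val := by
          rw [Finset.sum_union hD3, Finset.sum_union hD2, Finset.sum_union hd01]
      _ = 1 := by rw [hUnion]; exact hUsum
  -- final computation
  rw [hρ]
  have hIcc : Finset.Icc (1 : ℕ) 3 = {1, 2, 3} := by decide
  rw [hIcc]
  rw [Finset.sum_insert (by decide), Finset.sum_insert (by decide), Finset.sum_singleton,
    Finset.sum_insert (by decide), Finset.sum_insert (by decide), Finset.sum_singleton]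
  rw [hsum 1 (by norm_num), hsum 2 (by norm_num), hsum 3 (by norm_num)]
  have hlcases : l = 0 ∨ l = 1 ∨ l = 2 ∨ l = 3 := by omega
  rcases hlcases with rfl | rfl | rfl | rfl
  · norm_num
  · norm_num
    linear_combination (∑ u ∈ D 0, β ^ u.val) * h40 - hT
  · norm_num
    linear_combination ((∑ u ∈ D 0, β ^ u.val) + (∑ u ∈ D 1, β ^ u.val)) * h40 - 2 * hT
  · norm_num
    linear_combination ((∑ u ∈ D 0, β ^ u.val) + (∑ u ∈ D 1, β ^ u.val)
      + (∑ u ∈ D 2, β ^ u.val)) * h40 - 3 * hT
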